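/- Along any infinite trajectory, assuming robustness scores take values in a finite set, there exists a finite time τ ≥ 0 such that the smallest witness time of ρ_{[q U r]} for the shifted trajectory x_{τ:∞} equals 0. -/
import Mathlib


variable {X A : Type*}

/-- Suffix (time shift) of an infinite trajectory. -/
def shift (x : ℕ → X) (t : ℕ) : ℕ → X := fun n => x (n + t)

/-- The candidate term at witness time `t` in the quantitative semantics of `q U r`:
`min (r (x_{t:∞}), min_{0 ≤ k < t} q (x_k))` (empty min is `⊤`). -/
noncomputable def untilTerm (q : X → EReal) (r : (ℕ → X) → EReal) (x : ℕ → X) (t : ℕ) : EReal :=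
  min (r (shift x t)) (⨅ k : Fin t, q (x k))

/-- Robustness of `q U r` on an infinite trajectory. -/
noncomputable def untilRob (q : X → EReal) (r : (ℕ → X) → EReal) (x : ℕ → X) : EReal :=
  ⨆ t : ℕ, untilTerm q r x t

/-- Robustness of the finite-horizon until `q U_{[0,n]} r`. -/
noncomputable def finUntil (q : X → EReal) (r : (ℕ → X) → EReal) (n : ℕ) (x : ℕ → X) : EReal :=
  ⨆ t ∈ Finset.range (n + 1), untilTerm q r x t

lemma shift_shift (x : ℕ → X) (a b : ℕ) : shift (shift x a) b = shift x (b + a) := by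
  funext n; simp [shift, add_assoc]

lemma untilTerm_mem (q : X → EReal) (r : (ℕ → X) → EReal) (y : ℕ → X) (t : ℕ) :
    untilTerm q r y t ∈ insert (⊤ : EReal) (Set.range q ∪ Set.range r) := by
  rcases le_total (r (shift y t)) (⨅ k : Fin t, q (y k)) with h | h
  · rw [untilTerm, min_eq_left h]
    exact Set.mem_insert_iff.2 (Or.inr (Or.inr ⟨_, rfl⟩))
  · rw [untilTerm, min_eq_right h]
    rcases Nat.eq_zero_or_pos t with ht | ht
    · subst ht
      simp
    · have : Nonempty (Fin t) := ⟨⟨0, ht⟩⟩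
      obtain ⟨i, hi⟩ := Finite.exists_min (fun k : Fin t => q (y k))
      have : (⨅ k : Fin t, q (y k)) = q (y i) :=
        le_antisymm (iInf_le _ i) (le_iInf hi)
      rw [this]
      exact Set.mem_insert_iff.2 (Or.inr (Or.inl ⟨_, rfl⟩))

lemma sup_attained {f : ℕ → EReal} (hf : (Set.range f).Finite) : ∃ n, (⨆ m, f m) = f n := by
  have h := (Set.range_nonempty f).csSup_mem hf
  obtain ⟨n, hn⟩ := h
  exact ⟨n, by rw [← sSup_range, hn]⟩

/-- along any trajectory, under the finite-value-set assumption, there is a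
finite time τ such that the smallest witness time of ρ_{[q U r]} for the shifted trajectory
x_{τ:∞} equals 0, i.e. the supremum for x_{τ:∞} is attained at t = 0. -/
theorem exists_shift_with_zero_witness (q : X → EReal) (r : (ℕ → X) → EReal)
    (hq : (Set.range q).Finite) (hr : (Set.range r).Finite) (x : ℕ → X) :
    ∃ τ : ℕ, untilRob q r (shift x τ) = untilTerm q r (shift x τ) 0 := by
  set T : Set EReal := insert ⊤ (Set.range q ∪ Set.range r) with hT
  have hTfin : T.Finite := ((hq.union hr).insert ⊤)
  set ρ : ℕ → EReal := fun τ => untilRob q r (shift x τ) with hρ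
  -- each untilRob is attained
  have hatt : ∀ τ : ℕ, ∃ t, ρ τ = untilTerm q r (shift x τ) t := by
    intro τ
    apply sup_attained
    exact hTfin.subset (by rintro _ ⟨t, rfl⟩; exact untilTerm_mem q r _ t)
  -- ρ takes values in T
  have hρT : Set.range ρ ⊆ T := by
    rintro _ ⟨τ, rfl⟩
    obtain ⟨t, ht⟩ := hatt τ
    rw [ht]; exact untilTerm_mem q r _ t
  obtain ⟨τ₀, hτ₀⟩ := sup_attained (hTfin.subset hρT)
  have hmax : ∀ τ, ρ τ ≤ ρ τ₀ := fun τ => hτ₀ ▸ le_iSup ρ τ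
  obtain ⟨ts, hts⟩ := hatt τ₀
  refine ⟨ts + τ₀, ?_⟩
  have h1 : untilTerm q r (shift x τ₀) ts ≤ r (shift x (ts + τ₀)) := by
    rw [untilTerm, shift_shift]
    exact min_le_left _ _
  have h2 : untilTerm q r (shift x (ts + τ₀)) 0 = r (shift x (ts + τ₀)) := by
    rw [untilTerm, shift_shift, zero_add]
    simp
  have h3 : untilTerm q r (shift x (ts + τ₀)) 0 ≤ ρ (ts + τ₀) :=
    le_iSup (untilTerm q r (shift x (ts + τ₀))) 0
  have h4 : ρ (ts + τ₀) ≤ untilTerm q r (shift x (ts + τ₀)) 0 := by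
    calc ρ (ts + τ₀) ≤ ρ τ₀ := hmax _
      _ = untilTerm q r (shift x τ₀) ts := hts
      _ ≤ r (shift x (ts + τ₀)) := h1
      _ = untilTerm q r (shift x (ts + τ₀)) 0 := h2.symm
  exact le_antisymm h4 h3
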